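/- For every integer k ≥ 2, the union U_k(P_fin,0(ℕ)) of all sets of lengths of P_fin,0(ℕ) containing k equals the set of all integers ≥ 2; that is, for all integers k, m ≥ 2 there exists X ∈ P_fin,0(ℕ) with both k ∈ L(X) and m ∈ L(X), and conversely every integer m lying in some set of lengths that contains k satisfies m ≥ 2. -/
import Mathlib

open Pointwise

/-- `A` is an atom of the restricted power monoid `P_fin,0(ℕ)` of finite subsets of `ℕ`
containing `0`, under set addition. -/
def IsAtom0 (A : Finset ℕ) : Prop :=
  0 ∈ A ∧ A ≠ {0} ∧
    ∀ X Y : Finset ℕ, 0 ∈ X → 0 ∈ Y → A = X + Y → X = {0} ∨ Y = {0}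

/-- The set of lengths of `X` in `P_fin,0(ℕ)`: the set of `k` such that `X` is a sum
of `k` atoms of `P_fin,0(ℕ)`. -/
def lengths0 (X : Finset ℕ) : Set ℕ :=
  {k | ∃ l : List (Finset ℕ), l.length = k ∧ (∀ A ∈ l, IsAtom0 A) ∧ l.sum = X}

/- ### Auxiliary material -/

lemma zero_eq_singleton : (0 : Finset ℕ) = {0} := rfl

/-- Two-element sets `{0, a}` are atoms. -/
lemma atom_pair (a : ℕ) (ha : a ≠ 0) : IsAtom0 {0, a} := by
  refine ⟨by simp, ?_, ?_⟩
  · intro h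
    have : a ∈ ({0} : Finset ℕ) := h ▸ (by simp : a ∈ ({0, a} : Finset ℕ))
    simp at this; omega
  · intro X Y hX hY hEq
    by_contra hc
    push_neg at hc
    obtain ⟨hX1, hY1⟩ := hc
    have hXs : X ⊆ ({0, a} : Finset ℕ) := hEq ▸ Finset.subset_add_left X hY
    have hYs : Y ⊆ ({0, a} : Finset ℕ) := hEq ▸ Finset.subset_add_right Y hX
    obtain ⟨x, hx, hx0⟩ : ∃ x ∈ X, x ≠ 0 := by
      by_contra h; push_neg at h
      exact hX1 (Finset.eq_singleton_iff_unique_mem.2 ⟨hX, fun y hy => h y hy⟩)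
    obtain ⟨y, hy, hy0⟩ : ∃ y ∈ Y, y ≠ 0 := by
      by_contra h; push_neg at h
      exact hY1 (Finset.eq_singleton_iff_unique_mem.2 ⟨hY, fun z hz => h z hz⟩)
    have hxa : x = a := by have := hXs hx; simp at this; tauto
    have hya : y = a := by have := hYs hy; simp at this; tauto
    have : x + y ∈ ({0, a} : Finset ℕ) := by
      rw [hEq]; exact Finset.add_mem_add hx hy
    simp at this; omega

lemma atom_01 : IsAtom0 {0, 1} := atom_pair 1 one_ne_zero

/-- The auxiliary family: `B d = {0,1} ∪ {x : 2 ≤ x < d, x ≡ d-1 [MOD 2]}`. -/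
def Bset (d : ℕ) : Finset ℕ :=
  {0, 1} ∪ (Finset.range d).filter (fun x => 2 ≤ x ∧ (x + 1) % 2 = d % 2)

lemma mem_Bset {d x : ℕ} :
    x ∈ Bset d ↔ x = 0 ∨ x = 1 ∨ (2 ≤ x ∧ x < d ∧ (x + 1) % 2 = d % 2) := by
  simp [Bset, Finset.mem_union, Finset.mem_filter, Finset.mem_range]
  tauto

lemma Bset_le {d x : ℕ} (hd : 2 ≤ d) (hx : x ∈ Bset d) : x + 1 ≤ d := by
  rw [mem_Bset] at hx; omega

lemma add_Bset {d : ℕ} (hd : 2 ≤ d) :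
    ({0, 1} : Finset ℕ) + Bset d = Finset.range (d + 1) := by
  ext n
  simp only [Finset.mem_add, Finset.mem_insert, Finset.mem_singleton, mem_Bset,
    Finset.mem_range]
  constructor
  · rintro ⟨x, hx, y, hy, rfl⟩; omega
  · intro hn
    rcases Nat.lt_or_ge n 3 with h3 | h3
    · match n, hn with
      | 0, _ => exact ⟨0, Or.inl rfl, 0, Or.inl rfl, rfl⟩
      | 1, _ => exact ⟨0, Or.inl rfl, 1, Or.inr (Or.inl rfl), rfl⟩
      | 2, _ => exact ⟨1, Or.inr rfl, 1, Or.inr (Or.inl rfl), rfl⟩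
    · by_cases hp : (n + 1) % 2 = d % 2
      · exact ⟨0, Or.inl rfl, n, Or.inr (Or.inr ⟨by omega, by omega, hp⟩), by omega⟩
      · exact ⟨1, Or.inr rfl, n - 1, Or.inr (Or.inr ⟨by omega, by omega, by omega⟩),
          by omega⟩

/-- For `d ≥ 4`, `Bset d` is an atom. -/
lemma atom_Bset {d : ℕ} (hd : 4 ≤ d) : IsAtom0 (Bset d) := by
  refine ⟨mem_Bset.2 (Or.inl rfl), ?_, ?_⟩
  · intro h
    have : (1 : ℕ) ∈ Bset d := mem_Bset.2 (Or.inr (Or.inl rfl))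
    rw [h] at this; simp at this
  · intro X Y hX hY hEq
    by_contra hc
    push_neg at hc
    obtain ⟨hX1, hY1⟩ := hc
    have hXs : X ⊆ Bset d := hEq ▸ Finset.subset_add_left X hY
    have hYs : Y ⊆ Bset d := hEq ▸ Finset.subset_add_right Y hX
    have hle : ∀ x ∈ X, ∀ y ∈ Y, x + y + 1 ≤ d := fun x hx y hy =>
      Bset_le (by omega) (hEq ▸ Finset.add_mem_add hx hy)
    -- d - 1 ∈ Bset d, so it decomposes
    have hd1 : (d - 1) ∈ X + Y := hEq ▸ mem_Bset.2 (Or.inr (Or.inr ⟨by omega, by omega, by omega⟩))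
    obtain ⟨a, ha, b, hb, hab⟩ := Finset.mem_add.1 hd1
    -- 1 ∈ Bset d, so 1 ∈ X or 1 ∈ Y
    have h1 : (1 : ℕ) ∈ X + Y := hEq ▸ mem_Bset.2 (Or.inr (Or.inl rfl))
    obtain ⟨u, hu, v, hv, huv⟩ := Finset.mem_add.1 h1
    obtain ⟨x, hx, hx0⟩ : ∃ x ∈ X, x ≠ 0 := by
      by_contra h; push_neg at h
      exact hX1 (Finset.eq_singleton_iff_unique_mem.2 ⟨hX, fun y hy => h y hy⟩)
    obtain ⟨y, hy, hy0⟩ : ∃ y ∈ Y, y ≠ 0 := by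
      by_contra h; push_neg at h
      exact hY1 (Finset.eq_singleton_iff_unique_mem.2 ⟨hY, fun z hz => h z hz⟩)
    have haB := mem_Bset.1 (hXs ha)
    have hbB := mem_Bset.1 (hYs hb)
    -- case analysis
    rcases Nat.eq_zero_or_pos a with ha0 | ha0
    · -- a = 0, b = d-1 : then x + b exceeds d - 1
      have := hle x hx b hb
      have := mem_Bset.1 (hXs hx)
      omega
    rcases Nat.eq_zero_or_pos b with hb0 | hb0
    · have := hle a ha y hy
      have := mem_Bset.1 (hYs hy)
      omega
    rcases Nat.lt_or_ge a 2 with ha2 | ha2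
    · -- a = 1, so b = d - 2 ∈ Bset d: parity contradiction
      omega
    rcases Nat.lt_or_ge b 2 with hb2 | hb2
    · omega
    -- a, b ≥ 2: parity forces d odd, a, b even; then use 1 ∈ X or 1 ∈ Y
    have h1XY : (1 : ℕ) ∈ X ∨ (1 : ℕ) ∈ Y := by
      rcases Nat.eq_zero_or_pos u with hu0 | hu0
      · right; rwa [show v = 1 by omega] at hv
      · left; rwa [show u = 1 by omega] at hu
    rcases h1XY with h1X | h1Y
    · have hmem := mem_Bset.1 (hEq ▸ Finset.add_mem_add h1X hb : 1 + b ∈ Bset d)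
      omega
    · have hmem := mem_Bset.1 (hEq ▸ Finset.add_mem_add ha h1Y : a + 1 ∈ Bset d)
      omega

lemma range_add (a b : ℕ) :
    Finset.range (a + 1) + Finset.range (b + 1) = Finset.range (a + b + 1) := by
  ext n
  simp only [Finset.mem_add, Finset.mem_range]
  constructor
  · rintro ⟨x, hx, y, hy, rfl⟩; omega
  · intro hn
    exact ⟨min n a, by omega, n - min n a, by omega, by omega⟩

lemma range_two : (Finset.range 2 : Finset ℕ) = {0, 1} := by decide

lemma sum_replicate_01 (t : ℕ) :
    (List.replicate t ({0, 1} : Finset ℕ)).sum = Finset.range (t + 1) := by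
  induction t with
  | zero => simp [zero_eq_singleton]
  | succ t ih =>
    rw [List.replicate_succ, List.sum_cons, ih, ← range_two,
      show (Finset.range 2 : Finset ℕ) = Finset.range (1 + 1) from rfl, range_add,
      show 1 + t + 1 = t + 1 + 1 by omega]

/-- `2 ∈ L([0,n])` for `n ≥ 2`. -/
lemma two_mem_lengths {n : ℕ} (hn : 2 ≤ n) : 2 ∈ lengths0 (Finset.range (n + 1)) := by
  rcases Nat.lt_or_ge n 4 with h4 | h4
  · match n, hn with
    | 2, _ =>
      refine ⟨[{0,1}, {0,1}], rfl, ?_, ?_⟩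
      · intro A hA
        simp only [List.mem_cons, List.mem_singleton, List.not_mem_nil, or_false] at hA
        rcases hA with rfl | rfl <;> exact atom_01
      · decide
    | 3, _ =>
      refine ⟨[{0,1}, {0,2}], rfl, ?_, ?_⟩
      · intro A hA
        simp only [List.mem_cons, List.mem_singleton, List.not_mem_nil, or_false] at hA
        rcases hA with rfl | rfl
        · exact atom_01
        · exact atom_pair 2 (by omega)
      · decide
  · refine ⟨[{0,1}, Bset n], rfl, ?_, ?_⟩
    · intro A hA
      simp only [List.mem_cons, List.mem_singleton, List.not_mem_nil, or_false] at hA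
      rcases hA with rfl | rfl
      · exact atom_01
      · exact atom_Bset h4
    · show ({0,1} : Finset ℕ) + (Bset n + 0) = _
      rw [add_zero, add_Bset (by omega)]

/-- `k ∈ L([0,n])` whenever `2 ≤ k ≤ n`. -/
lemma k_mem_lengths {k n : ℕ} (hk : 2 ≤ k) (hkn : k ≤ n) :
    k ∈ lengths0 (Finset.range (n + 1)) := by
  obtain ⟨l, hlen, hatom, hsum⟩ := two_mem_lengths (n := n - k + 2) (by omega)
  refine ⟨List.replicate (k - 2) ({0,1} : Finset ℕ) ++ l, ?_, ?_, ?_⟩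
  · simp [hlen]; omega
  · intro A hA
    rcases List.mem_append.1 hA with h | h
    · rw [List.eq_of_mem_replicate h]; exact atom_01
    · exact hatom A h
  · rw [List.sum_append, sum_replicate_01, hsum, range_add,
      show k - 2 + (n - k + 2) + 1 = n + 1 by omega]

lemma zero_mem_sum {l : List (Finset ℕ)} (h : ∀ A ∈ l, 0 ∈ A) : 0 ∈ l.sum := by
  induction l with
  | nil => simp [zero_eq_singleton]
  | cons A t ih =>
    rw [List.sum_cons]
    exact Finset.add_mem_add (h A (by simp)) (ih fun B hB => h B (List.mem_cons_of_mem _ hB))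

lemma sum_ne_singleton {l : List (Finset ℕ)} (hne : l ≠ [])
    (h : ∀ A ∈ l, IsAtom0 A) : l.sum ≠ {0} := by
  obtain ⟨A, t, rfl⟩ := List.exists_cons_of_ne_nil hne
  have hA := h A (by simp)
  obtain ⟨hA0, hA1, _⟩ := hA
  obtain ⟨a, ha, ha0⟩ : ∃ a ∈ A, a ≠ 0 := by
    by_contra hc; push_neg at hc
    exact hA1 (Finset.eq_singleton_iff_unique_mem.2 ⟨hA0, fun y hy => hc y hy⟩)
  have h0t : 0 ∈ t.sum := zero_mem_sum fun B hB => (h B (List.mem_cons_of_mem _ hB)).1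
  have : a ∈ (A :: t).sum := by
    rw [List.sum_cons]
    exact Finset.subset_add_left A h0t ha
  intro hc
  rw [hc] at this
  simp at this
  exact ha0 this

/-- For every `k ≥ 2`, the union `U_k(P_fin,0(ℕ))` of all sets of lengths containing
`k` equals `ℕ_{≥2}`: for all `k, m ≥ 2` there is `X ∈ P_fin,0(ℕ)` with
`k, m ∈ L(X)`, and conversely every `m` lying in a set of lengths containing some
`k ≥ 2` satisfies `m ≥ 2`. -/
theorem stmt_19 :
    (∀ k m : ℕ, 2 ≤ k → 2 ≤ m →
      ∃ X : Finset ℕ, 0 ∈ X ∧ k ∈ lengths0 X ∧ m ∈ lengths0 X) ∧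
    (∀ k m : ℕ, 2 ≤ k → ∀ X : Finset ℕ, 0 ∈ X →
      k ∈ lengths0 X → m ∈ lengths0 X → 2 ≤ m) := by
  constructor
  · intro k m hk hm
    refine ⟨Finset.range (max k m + 1), Finset.mem_range.2 (by omega), ?_, ?_⟩
    · exact k_mem_lengths hk (le_max_left k m)
    · exact k_mem_lengths hm (le_max_right k m)
  · intro k m hk X hX hkL hmL
    obtain ⟨l, hlen, hatom, hsum⟩ := hkL
    obtain ⟨l', hlen', hatom', hsum'⟩ := hmL
    by_contra hm
    push_neg at hm
    have hlne : l ≠ [] := by intro h; rw [h] at hlen; simp at hlen; omega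
    have hXne : X ≠ {0} := hsum ▸ sum_ne_singleton hlne hatom
    interval_cases m
    · -- m = 0 : X = {0}
      have : l' = [] := List.length_eq_zero_iff.1 hlen'
      rw [this] at hsum'
      exact hXne (by rw [← hsum']; rfl)
    · -- m = 1 : X is an atom
      obtain ⟨A, rfl⟩ : ∃ A, l' = [A] := List.length_eq_one_iff.1 hlen'
      have hXA : X = A := by rw [← hsum']; simp
      have hAatom := hatom' A (by simp)
      obtain ⟨_, _, hAprop⟩ := hAatom
      -- split l into head and tail
      obtain ⟨A₁, t, rfl⟩ := List.exists_cons_of_ne_nil hlne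
      have htne : t ≠ [] := by
        intro h; rw [h] at hlen; simp at hlen; omega
      have hA₁ := hatom A₁ (by simp)
      have h0t : 0 ∈ t.sum := zero_mem_sum fun B hB => (hatom B (List.mem_cons_of_mem _ hB)).1
      have := hAprop A₁ t.sum hA₁.1 h0t (by rw [← hXA, ← hsum, List.sum_cons])
      rcases this with h | h
      · exact hA₁.2.1 h
      · exact sum_ne_singleton htne (fun B hB => hatom B (List.mem_cons_of_mem _ hB)) h
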